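/- Compactness of INQML over pseudo-models via FO: a set Φ ⊆ INQML is satisfiable at some nonempty information state of some pseudo-model if and only if every finite subset Φ₀ ⊆ Φ is satisfiable at some nonempty information state of some pseudo-model. -/

import Mathlib

inductive InqForm (P : Type) : Type
  | atom : P → InqForm P
  | bot : InqForm P
  | and : InqForm P → InqForm P → InqForm P
  | impl : InqForm P → InqForm P → InqForm P
  | ior : InqForm P → InqForm P → InqForm P
  | box : InqForm P → InqForm P
  | boxplus : InqForm P → InqForm P

/-- A pseudo-model: worlds `W`, inquisitive assignment `Sig` (nonempty valued),
propositional valuation `V`. -/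
structure PseudoModel (P W : Type) where
  Sig : W → Set (Set W)
  Sig_nonempty : ∀ w, (Sig w).Nonempty
  V : P → Set W

/-- The associated modal assignment σ(w) = ⋃ Σ(w). -/
def PseudoModel.sigma {P W : Type} (M : PseudoModel P W) (w : W) : Set W :=
  ⋃₀ M.Sig w

/-- Support semantics of INQML over pseudo-models. -/
def support {P W : Type} (M : PseudoModel P W) : InqForm P → Set W → Prop
  | .atom p, s => s ⊆ M.V p
  | .bot, s => s = ∅
  | .and φ ψ, s => support M φ s ∧ support M ψ s
  | .impl φ ψ, s => ∀ t ⊆ s, support M φ t → support M ψ t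
  | .ior φ ψ, s => support M φ s ∨ support M ψ s
  | .box φ, s => ∀ w ∈ s, support M φ (M.sigma w)
  | .boxplus φ, s => ∀ w ∈ s, ∀ t ∈ M.Sig w, support M φ t

/-- The flatness grade ♭(φ). -/
def flatGrade {P : Type} : InqForm P → ℕ
  | .atom _ => 0
  | .bot => 0
  | .and φ ψ => max (flatGrade φ) (flatGrade ψ)
  | .impl _ ψ => flatGrade ψ
  | .ior φ ψ => flatGrade φ + flatGrade ψ + 1
  | .box _ => 0
  | .boxplus _ => 0

/-- Downward closure of a family of information states. -/
def downClose {W : Type} (Pi : Set (Set W)) : Set (Set W) :=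
  {t | ∃ s ∈ Pi, t ⊆ s}

namespace InqCompact
open InqForm

variable {P W : Type}

theorem support_mono (M : PseudoModel P W) (φ : InqForm P) :
    ∀ {s t : Set W}, support M φ s → t ⊆ s → support M φ t := by
  induction φ with
  | atom p => intro s t h hts; exact hts.trans h
  | bot => intro s t h hts
           simp only [support] at *
           exact Set.eq_empty_of_subset_empty (h ▸ hts)
  | and φ ψ ih1 ih2 => intro s t h hts; exact ⟨ih1 h.1 hts, ih2 h.2 hts⟩
  | impl φ ψ ih1 ih2 => intro s t h hts u hut hu; exact h u (hut.trans hts) hu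
  | ior φ ψ ih1 ih2 =>
      intro s t h hts
      rcases h with h | h
      · exact Or.inl (ih1 h hts)
      · exact Or.inr (ih2 h hts)
  | box φ ih => intro s t h hts w hw; exact h w (hts hw)
  | boxplus φ ih => intro s t h hts w hw; exact h w (hts hw)

theorem support_empty (M : PseudoModel P W) (φ : InqForm P) : support M φ ∅ := by
  induction φ with
  | atom p => exact Set.empty_subset _
  | bot => rfl
  | and φ ψ ih1 ih2 => exact ⟨ih1, ih2⟩
  | impl φ ψ ih1 ih2 =>
      intro t ht _
      rw [Set.subset_empty_iff] at ht; subst ht; exact ih2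
  | ior φ ψ ih1 ih2 => exact Or.inl ih1
  | box φ ih => intro w hw; exact absurd hw (Set.notMem_empty w)
  | boxplus φ ih => intro w hw; exact absurd hw (Set.notMem_empty w)

theorem support_flat (M : PseudoModel P W) {φ : InqForm P} (h : flatGrade φ = 0) :
    ∀ s : Set W, support M φ s ↔ ∀ w ∈ s, support M φ {w} := by
  induction φ with
  | atom p =>
      intro s
      constructor
      · intro hs w hw; exact support_mono M _ hs (Set.singleton_subset_iff.2 hw)
      · intro hs w hw; exact (hs w hw) rfl
  | bot =>
      intro s
      constructor
      · intro hs w hw; exact support_mono M _ hs (Set.singleton_subset_iff.2 hw)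
      · intro hs
        simp only [support] at hs ⊢
        rw [Set.eq_empty_iff_forall_notMem]
        intro w hw
        exact (Set.singleton_ne_empty w) (hs w hw)
  | and φ ψ ih1 ih2 =>
      simp only [flatGrade, Nat.max_eq_zero_iff] at h
      intro s
      constructor
      · intro hs w hw; exact support_mono M _ hs (Set.singleton_subset_iff.2 hw)
      · intro hs
        exact ⟨(ih1 h.1 s).2 (fun w hw => (hs w hw).1),
               (ih2 h.2 s).2 (fun w hw => (hs w hw).2)⟩
  | impl φ ψ ih1 ih2 =>
      simp only [flatGrade] at h
      intro s
      constructor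
      · intro hs w hw; exact support_mono M _ hs (Set.singleton_subset_iff.2 hw)
      · intro hs t hts htφ
        refine (ih2 h t).2 ?_
        intro w hw
        have h1 : support M φ {w} := support_mono M _ htφ (Set.singleton_subset_iff.2 hw)
        exact hs w (hts hw) {w} (le_refl _) h1
  | ior φ ψ ih1 ih2 => simp only [flatGrade] at h; omega
  | box φ ih =>
      intro s
      constructor
      · intro hs w hw; exact support_mono M _ hs (Set.singleton_subset_iff.2 hw)
      · intro hs w hw; exact hs w hw w rfl
  | boxplus φ ih =>
      intro s
      constructor
      · intro hs w hw; exact support_mono M _ hs (Set.singleton_subset_iff.2 hw)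
      · intro hs w hw; exact hs w hw w rfl

theorem support_impl_singleton (M : PseudoModel P W) {φ ψ : InqForm P} {w : W} :
    support M (.impl φ ψ) {w} ↔ (support M φ {w} → support M ψ {w}) := by
  constructor
  · intro h hφ; exact h {w} (le_refl _) hφ
  · intro h t ht htφ
    rcases Set.subset_singleton_iff_eq.1 ht with rfl | rfl
    · exact support_empty M ψ
    · exact h htφ

theorem support_box_singleton (M : PseudoModel P W) {φ : InqForm P} {w : W} :
    support M (.box φ) {w} ↔ support M φ (M.sigma w) := by
  constructor
  · intro h; exact h w rfl
  · intro h v hv; rw [Set.mem_singleton_iff] at hv; subst hv; exact h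

theorem support_boxplus_singleton (M : PseudoModel P W) {φ : InqForm P} {w : W} :
    support M (.boxplus φ) {w} ↔ ∀ t ∈ M.Sig w, support M φ t := by
  constructor
  · intro h; exact h w rfl
  · intro h v hv; rw [Set.mem_singleton_iff] at hv; subst hv; exact h


/-! ### Resolutions -/

def tru : InqForm P := .impl .bot .bot

theorem flatGrade_tru : flatGrade (tru : InqForm P) = 0 := rfl

theorem support_tru (M : PseudoModel P W) (s : Set W) : support M (tru : InqForm P) s :=
  fun _ _ ht => ht

def bigAnd : List (InqForm P) → InqForm P
  | [] => tru
  | χ :: L => .and χ (bigAnd L)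

theorem support_bigAnd (M : PseudoModel P W) :
    ∀ (L : List (InqForm P)) (s : Set W),
      support M (bigAnd L) s ↔ ∀ χ ∈ L, support M χ s := by
  intro L
  induction L with
  | nil => intro s; simp [bigAnd, support_tru]
  | cons χ L ih =>
      intro s
      constructor
      · rintro ⟨h1, h2⟩ χ' hχ'
        rcases List.mem_cons.1 hχ' with rfl | hχ'
        · exact h1
        · exact (ih s).1 h2 χ' hχ'
      · intro h
        exact ⟨h χ (List.mem_cons_self), (ih s).2 (fun χ' hχ' => h χ' (List.mem_cons_of_mem _ hχ'))⟩

theorem flatGrade_bigAnd :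
    ∀ L : List (InqForm P), (∀ χ ∈ L, flatGrade χ = 0) → flatGrade (bigAnd L) = 0 := by
  intro L
  induction L with
  | nil => intro _; rfl
  | cons χ L ih =>
      intro h
      simp only [bigAnd, flatGrade, Nat.max_eq_zero_iff]
      exact ⟨h χ (List.mem_cons_self), ih (fun χ' hχ' => h χ' (List.mem_cons_of_mem _ hχ'))⟩

/-- Modal depth. -/
def mdepth : InqForm P → ℕ
  | .atom _ => 0
  | .bot => 0
  | .and φ ψ => max (mdepth φ) (mdepth ψ)
  | .impl φ ψ => max (mdepth φ) (mdepth ψ)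
  | .ior φ ψ => max (mdepth φ) (mdepth ψ)
  | .box φ => mdepth φ + 1
  | .boxplus φ => mdepth φ + 1

theorem mdepth_bigAnd {n : ℕ} :
    ∀ L : List (InqForm P), (∀ χ ∈ L, mdepth χ ≤ n) → mdepth (bigAnd L) ≤ n := by
  intro L
  induction L with
  | nil => intro _; exact Nat.zero_le n
  | cons χ L ih =>
      intro h
      simp only [bigAnd, mdepth, max_le_iff]
      exact ⟨h χ (List.mem_cons_self), ih (fun χ' hχ' => h χ' (List.mem_cons_of_mem _ hχ'))⟩

theorem mem_zipWith {α β γ : Type*} {g : α → β → γ} :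
    ∀ {l1 : List α} {l2 : List β} {c : γ}, c ∈ List.zipWith g l1 l2 →
      ∃ a ∈ l1, ∃ b ∈ l2, c = g a b := by
  intro l1
  induction l1 with
  | nil => intro l2 c hc; simp at hc
  | cons a l ih =>
      intro l2 c hc
      cases l2 with
      | nil => simp at hc
      | cons b l2 =>
          rcases List.mem_cons.1 hc with rfl | hc
          · exact ⟨a, List.mem_cons_self, b, List.mem_cons_self, rfl⟩
          · rcases ih hc with ⟨a', ha', b', hb', rfl⟩
            exact ⟨a', List.mem_cons_of_mem _ ha', b', List.mem_cons_of_mem _ hb', rfl⟩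

theorem mem_of_forall₂ {α : Type*} :
    ∀ {rs : List α} {L : List (List α)}, List.Forall₂ (· ∈ ·) rs L →
      ∀ b ∈ rs, ∃ y ∈ L, b ∈ y := by
  intro rs L h
  induction h with
  | nil => intro b hb; simp at hb
  | @cons a y rs' L' h1 h2 ih =>
      intro b hb
      rcases List.mem_cons.1 hb with rfl | hb
      · exact ⟨y, List.mem_cons_self, h1⟩
      · rcases ih b hb with ⟨y', hy', hby'⟩
        exact ⟨y', List.mem_cons_of_mem _ hy', hby'⟩

theorem zip_pair {l2 : List (InqForm P)} :
    ∀ (l1 : List (InqForm P)) (rs : List (InqForm P)),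
      List.Forall₂ (· ∈ ·) rs (l1.map fun _ => l2) →
      ∀ α ∈ l1, ∃ β ∈ l2, InqForm.impl α β ∈ List.zipWith .impl l1 rs := by
  intro l1
  induction l1 with
  | nil => intro rs _ α hα; simp at hα
  | cons a l ih =>
      intro rs h α hα
      rw [List.map_cons] at h
      cases h with
      | cons hb h' =>
          rcases List.mem_cons.1 hα with rfl | hα
          · exact ⟨_, hb, List.mem_cons_self⟩
          · rcases ih _ h' α hα with ⟨β, hβ, hmem⟩
            exact ⟨β, hβ, List.mem_cons_of_mem _ hmem⟩

theorem zipWith_map_self {α γ : Type*} (g : α → α → γ) (f : α → α) :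
    ∀ l : List α, List.zipWith g l (l.map f) = l.map fun a => g a (f a) := by
  intro l
  induction l with
  | nil => rfl
  | cons a l ih => simp [ih]

/-- All `and`-combinations. -/
def andProd : List (InqForm P) → List (InqForm P) → List (InqForm P)
  | [], _ => []
  | a :: l, l2 => l2.map (InqForm.and a) ++ andProd l l2

theorem mem_andProd {l1 l2 : List (InqForm P)} {χ : InqForm P} :
    χ ∈ andProd l1 l2 ↔ ∃ a ∈ l1, ∃ b ∈ l2, χ = .and a b := by
  induction l1 with
  | nil => simp [andProd]
  | cons a l ih =>
      simp only [andProd, List.mem_append, List.mem_map, ih, List.mem_cons]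
      constructor
      · rintro (⟨b, hb, rfl⟩ | ⟨a', ha', b, hb, rfl⟩)
        · exact ⟨a, Or.inl rfl, b, hb, rfl⟩
        · exact ⟨a', Or.inr ha', b, hb, rfl⟩
      · rintro ⟨a', rfl | ha', b, hb, rfl⟩
        · exact Or.inl ⟨b, hb, rfl⟩
        · exact Or.inr ⟨a', ha', b, hb, rfl⟩

/-- Resolutions. -/
def R : InqForm P → List (InqForm P)
  | .atom p => [.atom p]
  | .bot => [.bot]
  | .and φ ψ => andProd (R φ) (R ψ)
  | .impl φ ψ => (List.sections ((R φ).map fun _ => R ψ)).map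
      fun rs => bigAnd (List.zipWith .impl (R φ) rs)
  | .ior φ ψ => R φ ++ R ψ
  | .box φ => [.box φ]
  | .boxplus φ => [.boxplus φ]

theorem R_flat : ∀ φ : InqForm P, ∀ α ∈ R φ, flatGrade α = 0 := by
  intro φ
  induction φ with
  | atom p => intro α hα; rw [List.mem_singleton.1 hα]; rfl
  | bot => intro α hα; rw [List.mem_singleton.1 hα]; rfl
  | and φ ψ ih1 ih2 =>
      intro α hα
      rcases mem_andProd.1 hα with ⟨a, ha, b, hb, rfl⟩
      simp only [flatGrade, Nat.max_eq_zero_iff]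
      exact ⟨ih1 a ha, ih2 b hb⟩
  | impl φ ψ ih1 ih2 =>
      intro α hα
      rcases List.mem_map.1 hα with ⟨rs, hrs, rfl⟩
      have hF := List.mem_sections.1 hrs
      refine flatGrade_bigAnd _ ?_
      intro χ hχ
      rcases mem_zipWith hχ with ⟨a, ha, b, hb, rfl⟩
      rcases mem_of_forall₂ hF b hb with ⟨y, hy, hby⟩
      rcases List.mem_map.1 hy with ⟨_, _, rfl⟩
      exact ih2 b hby
  | ior φ ψ ih1 ih2 =>
      intro α hα
      rcases List.mem_append.1 hα with h | h
      · exact ih1 α h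
      · exact ih2 α h
  | box φ ih => intro α hα; rw [List.mem_singleton.1 hα]; rfl
  | boxplus φ ih => intro α hα; rw [List.mem_singleton.1 hα]; rfl

theorem mdepth_R : ∀ φ : InqForm P, ∀ α ∈ R φ, mdepth α ≤ mdepth φ := by
  intro φ
  induction φ with
  | atom p => intro α hα; rw [List.mem_singleton.1 hα]
  | bot => intro α hα; rw [List.mem_singleton.1 hα]
  | and φ ψ ih1 ih2 =>
      intro α hα
      rcases mem_andProd.1 hα with ⟨a, ha, b, hb, rfl⟩
      simp only [mdepth, max_le_iff]
      exact ⟨le_trans (ih1 a ha) (le_max_left _ _), le_trans (ih2 b hb) (le_max_right _ _)⟩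
  | impl φ ψ ih1 ih2 =>
      intro α hα
      rcases List.mem_map.1 hα with ⟨rs, hrs, rfl⟩
      have hF := List.mem_sections.1 hrs
      refine mdepth_bigAnd _ ?_
      intro χ hχ
      rcases mem_zipWith hχ with ⟨a, ha, b, hb, rfl⟩
      rcases mem_of_forall₂ hF b hb with ⟨y, hy, hby⟩
      rcases List.mem_map.1 hy with ⟨_, _, rfl⟩
      simp only [mdepth, max_le_iff]
      exact ⟨le_trans (ih1 a ha) (le_max_left _ _), le_trans (ih2 b hby) (le_max_right _ _)⟩
  | ior φ ψ ih1 ih2 =>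
      intro α hα
      rcases List.mem_append.1 hα with h | h
      · exact le_trans (ih1 α h) (le_max_left _ _)
      · exact le_trans (ih2 α h) (le_max_right _ _)
  | box φ ih => intro α hα; rw [List.mem_singleton.1 hα]
  | boxplus φ ih => intro α hα; rw [List.mem_singleton.1 hα]

theorem resolution (M : PseudoModel P W) :
    ∀ (φ : InqForm P) (s : Set W), support M φ s ↔ ∃ α ∈ R φ, support M α s := by
  intro φ
  induction φ with
  | atom p => intro s; simp [R]
  | bot => intro s; simp [R]
  | and φ ψ ih1 ih2 =>
      intro s
      constructor
      · rintro ⟨h1, h2⟩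
        obtain ⟨a, ha, hsa⟩ := (ih1 s).1 h1
        obtain ⟨b, hb, hsb⟩ := (ih2 s).1 h2
        exact ⟨.and a b, mem_andProd.2 ⟨a, ha, b, hb, rfl⟩, hsa, hsb⟩
      · rintro ⟨α, hα, hs⟩
        rcases mem_andProd.1 hα with ⟨a, ha, b, hb, rfl⟩
        exact ⟨(ih1 s).2 ⟨a, ha, hs.1⟩, (ih2 s).2 ⟨b, hb, hs.2⟩⟩
  | impl φ ψ ih1 ih2 =>
      intro s
      constructor
      · intro hs
        classical
        have key : ∀ α ∈ R φ, ∃ β ∈ R ψ, support M β {w | w ∈ s ∧ support M α {w}} := by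
          intro α hα
          set tα : Set W := {w | w ∈ s ∧ support M α {w}} with htα
          have h1 : tα ⊆ s := fun w hw => hw.1
          have h2 : support M α tα := (support_flat M (R_flat φ α hα) tα).2 (fun w hw => hw.2)
          have h3 : support M φ tα := (ih1 tα).2 ⟨α, hα, h2⟩
          exact (ih2 tα).1 (hs tα h1 h3)
        set f : InqForm P → InqForm P := fun α =>
          if h : ∃ β ∈ R ψ, support M β {w | w ∈ s ∧ support M α {w}} then h.choose
          else .bot with hf
        have hfspec : ∀ α ∈ R φ, f α ∈ R ψ ∧ support M (f α) {w | w ∈ s ∧ support M α {w}} := by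
          intro α hα
          have h := key α hα
          simp only [hf, dif_pos h]
          exact ⟨h.choose_spec.1, h.choose_spec.2⟩
        refine ⟨bigAnd (List.zipWith .impl (R φ) ((R φ).map f)), ?_, ?_⟩
        · refine List.mem_map.2 ⟨(R φ).map f, ?_, rfl⟩
          rw [List.mem_sections]
          rw [List.forall₂_map_right_iff, List.forall₂_map_left_iff, List.forall₂_same]
          intro α hα
          exact (hfspec α hα).1
        · rw [support_bigAnd]
          intro χ hχ
          rw [zipWith_map_self] at hχ
          rcases List.mem_map.1 hχ with ⟨α, hα, rfl⟩
          intro t ht htα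
          have hsub : t ⊆ {w | w ∈ s ∧ support M α {w}} := by
            intro w hw
            exact ⟨ht hw, support_mono M α htα (Set.singleton_subset_iff.2 hw)⟩
          exact support_mono M (f α) (hfspec α hα).2 hsub
      · rintro ⟨α, hα, hs⟩
        rcases List.mem_map.1 hα with ⟨rs, hrs, rfl⟩
        have hF := List.mem_sections.1 hrs
        intro t ht htφ
        obtain ⟨a, ha, hta⟩ := (ih1 t).1 htφ
        obtain ⟨β, hβ, hmem⟩ := zip_pair (R φ) rs hF a ha
        have h1 := (support_bigAnd M _ s).1 hs _ hmem
        exact (ih2 t).2 ⟨β, hβ, h1 t ht hta⟩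
  | ior φ ψ ih1 ih2 =>
      intro s
      constructor
      · rintro (h | h)
        · obtain ⟨α, hα, hs⟩ := (ih1 s).1 h
          exact ⟨α, List.mem_append.2 (Or.inl hα), hs⟩
        · obtain ⟨α, hα, hs⟩ := (ih2 s).1 h
          exact ⟨α, List.mem_append.2 (Or.inr hα), hs⟩
      · rintro ⟨α, hα, hs⟩
        rcases List.mem_append.1 hα with h | h
        · exact Or.inl ((ih1 s).2 ⟨α, h, hs⟩)
        · exact Or.inr ((ih2 s).2 ⟨α, h, hs⟩)
  | box φ ih => intro s; simp [R]
  | boxplus φ ih => intro s; simp [R]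


/-! ### Ultraproducts of pseudo-models -/

section Ultra

variable {I : Type} (U : Ultrafilter I) {W : I → Type} (M : ∀ i, PseudoModel P (W i))

theorem U_mono {A B : Set I} (h : A ∈ U) (hAB : A ⊆ B) : B ∈ U :=
  Filter.mem_of_superset h hAB

theorem U_imp {p q : I → Prop} :
    {i | p i → q i} ∈ U ↔ ({i | p i} ∈ U → {i | q i} ∈ U) := by
  constructor
  · intro h hp
    exact U_mono U (Filter.inter_mem h hp) (fun i hi => hi.1 hi.2)
  · intro h
    by_cases hp : {i | p i} ∈ U
    · exact U_mono U (h hp) (fun i hq _ => hq)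
    · have hc : {i | p i}ᶜ ∈ U := Ultrafilter.compl_mem_iff_notMem.2 hp
      exact U_mono U hc (fun i hi hpi => absurd hpi hi)

theorem U_or {p q : I → Prop} :
    {i | p i ∨ q i} ∈ U ↔ ({i | p i} ∈ U ∨ {i | q i} ∈ U) := by
  have h : {i | p i ∨ q i} = {i | p i} ∪ {i | q i} := rfl
  rw [h, Ultrafilter.union_mem_iff]

theorem U_and {p q : I → Prop} :
    {i | p i ∧ q i} ∈ U ↔ ({i | p i} ∈ U ∧ {i | q i} ∈ U) := by
  constructor
  · intro h
    exact ⟨U_mono U h (fun i hi => hi.1), U_mono U h (fun i hi => hi.2)⟩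
  · rintro ⟨h1, h2⟩
    exact U_mono U (Filter.inter_mem h1 h2) (fun i hi => hi)

theorem U_pigeon {A : Type*} (L : List A) (S : A → Set I)
    (h : {i | ∃ a ∈ L, i ∈ S a} ∈ U) : ∃ a ∈ L, S a ∈ U := by
  induction L with
  | nil =>
      exfalso
      have h0 : (∅ : Set I) ∈ U := by
        refine U_mono U h ?_
        rintro i ⟨a, ha, -⟩
        simp at ha
      exact Filter.empty_notMem (U : Filter I) (Ultrafilter.mem_coe.2 h0)
  | cons a L ih =>
      have heq : {i | ∃ b ∈ a :: L, i ∈ S b} = S a ∪ {i | ∃ b ∈ L, i ∈ S b} := by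
        ext i
        simp [List.mem_cons, or_and_right, exists_or]
      rw [heq, Ultrafilter.union_mem_iff] at h
      rcases h with h | h
      · exact ⟨a, List.mem_cons_self, h⟩
      · rcases ih h with ⟨b, hb, hS⟩
        exact ⟨b, List.mem_cons_of_mem _ hb, hS⟩

/-- Internal state determined by a family of states. -/
def Tg (g : ∀ i, Set (W i)) : Set (∀ i, W i) := {f | {i | f i ∈ g i} ∈ U}

/-- The ultraproduct pseudo-model. -/
def UP : PseudoModel P (∀ i, W i) where
  Sig w := {t | ∃ g : ∀ i, Set (W i), {i | g i ∈ (M i).Sig (w i)} ∈ U ∧ t = Tg U g}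
  Sig_nonempty w := by
    classical
    refine ⟨Tg U (fun i => ((M i).Sig_nonempty (w i)).some), ?_⟩
    refine ⟨fun i => ((M i).Sig_nonempty (w i)).some, ?_, rfl⟩
    have h : {i | ((M i).Sig_nonempty (w i)).some ∈ (M i).Sig (w i)} = Set.univ := by
      refine Set.eq_univ_of_forall ?_
      intro i
      exact ((M i).Sig_nonempty (w i)).some_mem
    rw [h]
    exact Filter.univ_mem
  V p := {f | {i | f i ∈ (M i).V p} ∈ U}

theorem sigma_UP (f : ∀ i, W i) :
    (UP U M).sigma f = Tg U (fun i => (M i).sigma (f i)) := by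
  classical
  ext x
  constructor
  · rintro ⟨t, ⟨g, hg, rfl⟩, hx⟩
    refine U_mono U (Filter.inter_mem hg hx) ?_
    rintro i ⟨h1, h2⟩
    exact ⟨g i, h1, h2⟩
  · intro hx
    set g : ∀ i, Set (W i) := fun i =>
      if h : ∃ t ∈ (M i).Sig (f i), x i ∈ t then h.choose
      else ((M i).Sig_nonempty (f i)).some with hgdef
    have hg1 : ∀ i, g i ∈ (M i).Sig (f i) := by
      intro i
      by_cases h : ∃ t ∈ (M i).Sig (f i), x i ∈ t
      · simp only [hgdef, dif_pos h]; exact h.choose_spec.1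
      · simp only [hgdef, dif_neg h]; exact ((M i).Sig_nonempty (f i)).some_mem
    have hg2 : ∀ i, x i ∈ (M i).sigma (f i) → x i ∈ g i := by
      intro i hi
      have h : ∃ t ∈ (M i).Sig (f i), x i ∈ t := hi
      simp only [hgdef, dif_pos h]
      exact h.choose_spec.2
    refine ⟨Tg U g, ⟨g, ?_, rfl⟩, U_mono U hx hg2⟩
    have h : {i | g i ∈ (M i).Sig (f i)} = Set.univ := Set.eq_univ_of_forall hg1
    rw [h]
    exact Filter.univ_mem

/-- Łoś for flat formulas at internal states, given Łoś at singletons. -/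
theorem losB (hne : ∀ i, Nonempty (W i)) {α : InqForm P} (hα : flatGrade α = 0)
    (hA : ∀ f : ∀ i, W i,
      support (UP U M) α {f} ↔ {i | support (M i) α {f i}} ∈ U)
    (g : ∀ i, Set (W i)) :
    support (UP U M) α (Tg U g) ↔ {i | support (M i) α (g i)} ∈ U := by
  classical
  constructor
  · intro h
    by_contra hc
    have hD : {i | ¬ support (M i) α (g i)} ∈ U := by
      have := Ultrafilter.compl_mem_iff_notMem.2 hc
      exact U_mono U this (fun i hi => hi)
    set f : ∀ i, W i := fun i =>
      if hx : ∃ w ∈ g i, ¬ support (M i) α {w} then hx.choose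
      else (hne i).some with hfdef
    have hfD : ∀ i, ¬ support (M i) α (g i) → f i ∈ g i ∧ ¬ support (M i) α {f i} := by
      intro i hi
      have hex : ∃ w ∈ g i, ¬ support (M i) α {w} := by
        by_contra hno
        push_neg at hno
        exact hi ((support_flat (M i) hα (g i)).2 hno)
      simp only [hfdef, dif_pos hex]
      exact ⟨hex.choose_spec.1, hex.choose_spec.2⟩
    have hfg : f ∈ Tg U g := U_mono U hD (fun i hi => (hfD i hi).1)
    have h1 : support (UP U M) α {f} := support_mono _ α h (Set.singleton_subset_iff.2 hfg)
    have h2 := (hA f).1 h1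
    have h3 := Filter.inter_mem h2 hD
    have h4 : ({i | support (M i) α {f i}} ∩ {i | ¬ support (M i) α (g i)}) = ∅ := by
      rw [Set.eq_empty_iff_forall_notMem]
      rintro i ⟨ha, hb⟩
      exact (hfD i hb).2 ha
    rw [h4] at h3
    exact Filter.empty_notMem (U : Filter I) (Ultrafilter.mem_coe.2 h3)
  · intro hE
    rw [support_flat _ hα]
    intro f hf
    refine (hA f).2 (U_mono U (Filter.inter_mem hE hf) ?_)
    rintro i ⟨h1, h2⟩
    exact support_mono _ α h1 (Set.singleton_subset_iff.2 h2)

/-- Łoś at singleton states. -/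
theorem losA (hne : ∀ i, Nonempty (W i)) :
    ∀ (n : ℕ) (φ : InqForm P), mdepth φ ≤ n → ∀ f : ∀ i, W i,
      (support (UP U M) φ {f} ↔ {i | support (M i) φ {f i}} ∈ U) := by
  classical
  intro n
  induction n using Nat.strong_induction_on with
  | _ n IH =>
  intro φ
  induction φ with
  | atom p =>
      intro _ f
      have h1 : support (UP U M) (.atom p) {f} ↔ {i | f i ∈ (M i).V p} ∈ U := by
        constructor
        · intro h; exact h rfl
        · intro h x hx
          rw [Set.mem_singleton_iff] at hx; subst hx; exact h
      rw [h1]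
      have h2 : {i | support (M i) (.atom p) {f i}} = {i | f i ∈ (M i).V p} := by
        ext i
        show ({f i} ⊆ (M i).V p) ↔ _
        rw [Set.singleton_subset_iff]
        exact Iff.rfl
      rw [h2]
  | bot =>
      intro _ f
      constructor
      · intro h
        exact absurd h (Set.singleton_ne_empty f)
      · intro h
        exfalso
        have h2 : {i | support (M i) (.bot : InqForm P) {f i}} = ∅ := by
          rw [Set.eq_empty_iff_forall_notMem]
          intro i hi
          exact Set.singleton_ne_empty (f i) hi
        rw [h2] at h
        exact Filter.empty_notMem (U : Filter I) (Ultrafilter.mem_coe.2 h)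
  | and φ ψ ih1 ih2 =>
      intro hd f
      have d1 : mdepth φ ≤ n := le_trans (le_max_left _ _) hd
      have d2 : mdepth ψ ≤ n := le_trans (le_max_right _ _) hd
      have h2 : {i | support (M i) (.and φ ψ) {f i}}
          = {i | support (M i) φ {f i} ∧ support (M i) ψ {f i}} := rfl
      show (support (UP U M) φ {f} ∧ support (UP U M) ψ {f}) ↔ _
      rw [ih1 d1 f, ih2 d2 f, h2, U_and]
  | impl φ ψ ih1 ih2 =>
      intro hd f
      have d1 : mdepth φ ≤ n := le_trans (le_max_left _ _) hd
      have d2 : mdepth ψ ≤ n := le_trans (le_max_right _ _) hd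
      have h2 : {i | support (M i) (.impl φ ψ) {f i}}
          = {i | support (M i) φ {f i} → support (M i) ψ {f i}} := by
        ext i
        exact support_impl_singleton (M i)
      rw [support_impl_singleton, ih1 d1 f, ih2 d2 f, h2, U_imp]
  | ior φ ψ ih1 ih2 =>
      intro hd f
      have d1 : mdepth φ ≤ n := le_trans (le_max_left _ _) hd
      have d2 : mdepth ψ ≤ n := le_trans (le_max_right _ _) hd
      have h2 : {i | support (M i) (.ior φ ψ) {f i}}
          = {i | support (M i) φ {f i} ∨ support (M i) ψ {f i}} := rfl
      show (support (UP U M) φ {f} ∨ support (UP U M) ψ {f}) ↔ _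
      rw [ih1 d1 f, ih2 d2 f, h2, U_or]
  | box φ ih =>
      intro hd f
      have hd' : mdepth φ < n := by
        have : mdepth φ + 1 ≤ n := hd
        omega
      have hBox : ∀ i (w : W i),
          support (M i) (.box φ) {w} ↔ support (M i) φ ((M i).sigma w) :=
        fun i w => support_box_singleton (M i)
      constructor
      · intro h
        have h0 : support (UP U M) φ ((UP U M).sigma f) := h f rfl
        rw [sigma_UP] at h0
        obtain ⟨α, hα, hsα⟩ := (resolution _ φ _).1 h0
        have hA := IH (mdepth φ) hd' α (mdepth_R φ α hα)
        have hαU := (losB U M hne (R_flat φ α hα) hA (fun i => (M i).sigma (f i))).1 hsα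
        refine U_mono U hαU ?_
        intro i hi
        exact (hBox i (f i)).2 ((resolution _ φ _).2 ⟨α, hα, hi⟩)
      · intro h
        have h' : {i | support (M i) φ ((M i).sigma (f i))} ∈ U :=
          U_mono U h (fun i hi => (hBox i (f i)).1 hi)
        have h'' : {i | ∃ α ∈ R φ, support (M i) α ((M i).sigma (f i))} ∈ U :=
          U_mono U h' (fun i hi => (resolution _ φ _).1 hi)
        obtain ⟨α, hα, hαU⟩ := U_pigeon U (R φ) _ h''
        have hA := IH (mdepth φ) hd' α (mdepth_R φ α hα)
        have hs : support (UP U M) α (Tg U (fun i => (M i).sigma (f i))) :=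
          (losB U M hne (R_flat φ α hα) hA _).2 hαU
        rw [← sigma_UP] at hs
        intro w hw
        rw [Set.mem_singleton_iff] at hw; subst hw
        exact (resolution _ φ _).2 ⟨α, hα, hs⟩
  | boxplus φ ih =>
      intro hd f
      have hd' : mdepth φ < n := by
        have : mdepth φ + 1 ≤ n := hd
        omega
      have hBp : ∀ i (w : W i),
          support (M i) (.boxplus φ) {w} ↔ ∀ t ∈ (M i).Sig w, support (M i) φ t :=
        fun i w => support_boxplus_singleton (M i)
      constructor
      · intro h
        by_contra hc
        have hD : {i | ¬ ∀ t ∈ (M i).Sig (f i), support (M i) φ t} ∈ U := by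
          have hc' : {i | support (M i) (.boxplus φ) {f i}}ᶜ ∈ U :=
            Ultrafilter.compl_mem_iff_notMem.2 hc
          refine U_mono U hc' ?_
          intro i hi hall
          exact hi ((hBp i (f i)).2 hall)
        set g : ∀ i, Set (W i) := fun i =>
          if hx : ∃ t ∈ (M i).Sig (f i), ¬ support (M i) φ t then hx.choose
          else ((M i).Sig_nonempty (f i)).some with hgdef
        have hg1 : ∀ i, g i ∈ (M i).Sig (f i) := by
          intro i
          by_cases hx : ∃ t ∈ (M i).Sig (f i), ¬ support (M i) φ t
          · simp only [hgdef, dif_pos hx]; exact hx.choose_spec.1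
          · simp only [hgdef, dif_neg hx]; exact ((M i).Sig_nonempty (f i)).some_mem
        have hg2 : ∀ i, (¬ ∀ t ∈ (M i).Sig (f i), support (M i) φ t) →
            ¬ support (M i) φ (g i) := by
          intro i hi
          have hx : ∃ t ∈ (M i).Sig (f i), ¬ support (M i) φ t := by
            push_neg at hi
            exact hi
          simp only [hgdef, dif_pos hx]
          exact hx.choose_spec.2
        have hTg : Tg U g ∈ (UP U M).Sig f := by
          refine ⟨g, ?_, rfl⟩
          have huniv : {i | g i ∈ (M i).Sig (f i)} = Set.univ := Set.eq_univ_of_forall hg1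
          rw [huniv]
          exact Filter.univ_mem
        have hsupp : support (UP U M) φ (Tg U g) := h f rfl _ hTg
        obtain ⟨α, hα, hsα⟩ := (resolution _ φ _).1 hsupp
        have hA := IH (mdepth φ) hd' α (mdepth_R φ α hα)
        have hαU := (losB U M hne (R_flat φ α hα) hA g).1 hsα
        have h3 := Filter.inter_mem hαU hD
        have h4 : ({i | support (M i) α (g i)}
            ∩ {i | ¬ ∀ t ∈ (M i).Sig (f i), support (M i) φ t}) = ∅ := by
          rw [Set.eq_empty_iff_forall_notMem]
          rintro i ⟨ha, hb⟩
          exact hg2 i hb ((resolution _ φ _).2 ⟨α, hα, ha⟩)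
        rw [h4] at h3
        exact Filter.empty_notMem (U : Filter I) (Ultrafilter.mem_coe.2 h3)
      · intro h
        have key : ∀ t ∈ (UP U M).Sig f, support (UP U M) φ t := by
          rintro t ⟨g, hgU, rfl⟩
          have hE : {i | ∀ t ∈ (M i).Sig (f i), support (M i) φ t} ∈ U :=
            U_mono U h (fun i hi => (hBp i (f i)).1 hi)
          have h2 : {i | ∃ α ∈ R φ, support (M i) α (g i)} ∈ U := by
            refine U_mono U (Filter.inter_mem hE hgU) ?_
            rintro i ⟨h1, h2⟩
            exact (resolution _ φ _).1 (h1 (g i) h2)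
          obtain ⟨α, hα, hαU⟩ := U_pigeon U (R φ) _ h2
          have hA := IH (mdepth φ) hd' α (mdepth_R φ α hα)
          exact (resolution _ φ _).2 ⟨α, hα, (losB U M hne (R_flat φ α hα) hA g).2 hαU⟩
        intro w hw
        rw [Set.mem_singleton_iff] at hw
        subst hw
        exact key


end Ultra

end InqCompact

open InqCompact

theorem inqml_compactness_pseudo {P : Type} (Φ : Set (InqForm P)) :
    (∃ (W : Type) (M : PseudoModel P W) (s : Set W),
        s.Nonempty ∧ ∀ φ ∈ Φ, support M φ s) ↔
      ∀ Φ₀ ⊆ Φ, Φ₀.Finite →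
        ∃ (W : Type) (M : PseudoModel P W) (s : Set W),
          s.Nonempty ∧ ∀ φ ∈ Φ₀, support M φ s := by
  constructor
  · rintro ⟨W, M, s, hs, h⟩ Φ₀ hsub _
    exact ⟨W, M, s, hs, fun φ hφ => h φ (hsub hφ)⟩
  · intro h
    classical
    set I := {t : Set (InqForm P) // t ⊆ Φ ∧ t.Finite} with hI
    have hch : ∀ i : I, ∃ (W : Type) (M : PseudoModel P W) (s : Set W),
        s.Nonempty ∧ ∀ φ ∈ i.1, support M φ s := fun i => h i.1 i.2.1 i.2.2
    choose W M s hsne hsupp using hch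
    have hne : ∀ i, Nonempty (W i) := fun i => ⟨(hsne i).some⟩
    set F : InqForm P → Set I := fun φ => {i : I | φ ∈ i.1} with hF
    set gens : Set (Set I) := {A | ∃ φ ∈ Φ, A = F φ} with hgens
    have hFinj : ∀ φ ∈ Φ, ∀ ψ ∈ Φ, F φ = F ψ → φ = ψ := by
      intro φ hφ ψ hψ he
      have hi : (⟨{φ}, by simpa using hφ, Set.finite_singleton φ⟩ : I) ∈ F φ := rfl
      rw [he] at hi
      have : ψ ∈ ({φ} : Set (InqForm P)) := hi
      exact (Set.mem_singleton_iff.1 this).symm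
    have hFne : (Filter.generate gens).NeBot := by
      rw [Filter.generate_neBot_iff]
      intro t ht hfin
      set S : Set (InqForm P) := {φ | φ ∈ Φ ∧ F φ ∈ t} with hS
      have hSsub : S ⊆ Φ := fun φ hφ => hφ.1
      have hSfin : S.Finite := by
        refine Set.Finite.of_finite_image (f := F) (hfin.subset ?_) ?_
        · rintro A ⟨φ, hφ, rfl⟩
          exact hφ.2
        · intro φ hφ ψ hψ he
          exact hFinj φ hφ.1 ψ hψ.1 he
      refine ⟨⟨S, hSsub, hSfin⟩, ?_⟩
      intro A hA
      rcases ht hA with ⟨φ, hφ, rfl⟩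
      exact ⟨hφ, hA⟩
    haveI := hFne
    set U : Ultrafilter I := Ultrafilter.of (Filter.generate gens) with hU
    have hgen : ∀ φ ∈ Φ, F φ ∈ U := by
      intro φ hφ
      have h1 : F φ ∈ Filter.generate gens := Filter.mem_generate_of_mem ⟨φ, hφ, rfl⟩
      exact Ultrafilter.mem_coe.1 (Ultrafilter.of_le (Filter.generate gens) h1)
    refine ⟨∀ i, W i, UP U M, Tg U (fun i => s i), ?_, ?_⟩
    · refine ⟨fun i => (hsne i).some, ?_⟩
      show {i | (hsne i).some ∈ s i} ∈ U
      have huniv : {i : I | (hsne i).some ∈ s i} = Set.univ :=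
        Set.eq_univ_of_forall (fun i => (hsne i).some_mem)
      rw [huniv]
      exact Filter.univ_mem
    · intro φ hφ
      have h1 : {i : I | support (M i) φ (s i)} ∈ U :=
        U_mono U (hgen φ hφ) (fun i hi => hsupp i φ hi)
      have h2 : {i | ∃ α ∈ R φ, support (M i) α (s i)} ∈ U :=
        U_mono U h1 (fun i hi => (resolution _ φ _).1 hi)
      obtain ⟨α, hα, hαU⟩ := U_pigeon U (R φ) _ h2
      have hA := losA U M hne (mdepth α) α le_rfl
      exact (resolution _ φ _).2 ⟨α, hα, (losB U M hne (R_flat φ α hα) hA _).2 hαU⟩
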